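/- Let σ > 0 and θ₀, θ₁ ≥ 0. The function r : (0,1) → ℝ defined by r(x) = (σ + log(1-x) - θ₁x)(x-1) + θ₀x has a unique root in (0,1). -/

import Mathlib

open Real Set

theorem unique_root (σ θ₀ θ₁ : ℝ) (hσ : 0 < σ) (hθ₀ : 0 ≤ θ₀) (hθ₁ : 0 ≤ θ₁)
    (r : ℝ → ℝ)
    (hr : ∀ x, r x = (σ + Real.log (1 - x) - θ₁ * x) * (x - 1) + θ₀ * x) :
    ∃! x : ℝ, x ∈ Set.Ioo (0:ℝ) 1 ∧ r x = 0 := by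
  have hrf : r = fun x => (σ - θ₁*x)*(x-1) - (1-x)*Real.log (1-x) + θ₀*x := by
    funext x; rw [hr x]; ring
  -- continuity
  have hmul : Continuous fun x : ℝ => (1-x) * Real.log (1-x) :=
    Real.continuous_mul_log.comp (continuous_const.sub continuous_id)
  have hcontr : Continuous r := by
    rw [hrf]
    exact (((continuous_const.sub (continuous_const.mul continuous_id)).mul
      (continuous_id.sub continuous_const)).sub hmul).add
      (continuous_const.mul continuous_id)
  -- derivative on (0,1)
  set g : ℝ → ℝ := fun x => σ + θ₁ - 2*θ₁*x + Real.log (1-x) + 1 + θ₀ with hg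
  have hderiv : ∀ x ∈ Ioo (0:ℝ) 1, HasDerivAt r (g x) x := by
    intro x hx
    have hx1 : (1:ℝ) - x ≠ 0 := by
      have := hx.2; intro h; linarith [hx.2]
    have hlin : HasDerivAt (fun y : ℝ => 1 - y) (-1) x := by
      simpa using (hasDerivAt_id x).const_sub 1
    have hlog : HasDerivAt (fun y : ℝ => Real.log (1-y)) ((1-x)⁻¹ * (-1)) x :=
      (Real.hasDerivAt_log hx1).comp x hlin
    have h1 : HasDerivAt (fun y : ℝ => (σ - θ₁*y)*(y-1))
        ((-θ₁)*(x-1) + (σ - θ₁*x)*1) x := by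
      have ha : HasDerivAt (fun y : ℝ => σ - θ₁*y) (-θ₁) x := by
        simpa using ((hasDerivAt_id x).const_mul θ₁).const_sub σ
      have hb : HasDerivAt (fun y : ℝ => y - 1) 1 x := by
        simpa using (hasDerivAt_id x).sub_const 1
      exact ha.mul hb
    have h2 : HasDerivAt (fun y : ℝ => (1-y)*Real.log (1-y))
        ((-1)*Real.log (1-x) + (1-x)*((1-x)⁻¹ * (-1))) x := hlin.mul hlog
    have h3 : HasDerivAt (fun y : ℝ => θ₀*y) θ₀ x := by
      simpa using (hasDerivAt_id x).const_mul θ₀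
    have := (h1.sub h2).add h3
    rw [hrf]
    refine this.congr_deriv ?_
    have : (1-x)*((1-x)⁻¹ * (-1)) = -1 := by
      field_simp
    rw [hg]; simp only []
    rw [this]; ring
  -- strict concavity on [0,1]
  have hanti : StrictAntiOn g (Ioo (0:ℝ) 1) := by
    intro x hx y hy hxy
    have hlog : Real.log (1-y) < Real.log (1-x) :=
      Real.log_lt_log (by linarith [hy.2]) (by linarith)
    have : 2*θ₁*x ≤ 2*θ₁*y := by nlinarith
    simp only [hg]
    linarith
  have hconc : StrictConcaveOn ℝ (Icc (0:ℝ) 1) r := by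
    apply StrictAntiOn.strictConcaveOn_of_deriv (convex_Icc 0 1) hcontr.continuousOn
    rw [interior_Icc]
    intro x hx y hy hxy
    rw [(hderiv x hx).deriv, (hderiv y hy).deriv]
    exact hanti hx hy hxy
  -- values at special points
  have hr0 : r 0 = -σ := by rw [hr]; simp
  have hr1 : r 1 = θ₀ := by rw [hr]; simp
  -- a point where r is positive
  set x₀ : ℝ := 1 - Real.exp (-σ - θ₁ - 1) with hx₀
  have hex : Real.exp (-σ - θ₁ - 1) < 1 := by
    rw [Real.exp_lt_one_iff]; linarith
  have hx₀0 : 0 < x₀ := by simp [hx₀]; linarith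
  have hx₀1 : x₀ < 1 := by
    have := Real.exp_pos (-σ - θ₁ - 1); simp [hx₀]; linarith
  have hlogx₀ : Real.log (1 - x₀) = -σ - θ₁ - 1 := by
    simp [hx₀]
  have hrx₀ : 0 < r x₀ := by
    rw [hr, hlogx₀]
    have h1 : σ + (-σ - θ₁ - 1) - θ₁ * x₀ < 0 := by nlinarith
    have h2 : x₀ - 1 < 0 := by linarith
    nlinarith
  -- existence via IVT on [0, x₀]
  obtain ⟨c, hc, hrc⟩ : ∃ c ∈ Ioo (0:ℝ) x₀, r c = 0 := by
    have hsub : Ioo (r 0) (r x₀) ⊆ r '' (Ioo 0 x₀) :=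
      intermediate_value_Ioo (le_of_lt hx₀0) hcontr.continuousOn
    have h0mem : (0:ℝ) ∈ Ioo (r 0) (r x₀) := by
      constructor
      · rw [hr0]; linarith
      · exact hrx₀
    obtain ⟨c, hc, hrc⟩ := hsub h0mem
    exact ⟨c, hc, hrc⟩
  have hcmem : c ∈ Ioo (0:ℝ) 1 := ⟨hc.1, lt_trans hc.2 hx₀1⟩
  refine ⟨c, ⟨hcmem, hrc⟩, ?_⟩
  -- uniqueness: strict concavity
  rintro y ⟨hy, hry⟩
  by_contra hne
  -- wlog: two roots a < b with b expressed as convex comb of a and 1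
  have key : ∀ a b : ℝ, a ∈ Ioo (0:ℝ) 1 → b ∈ Ioo (0:ℝ) 1 → a < b →
      r a = 0 → r b = 0 → False := by
    intro a b ha hb hab hra hrb
    have h1a : 0 < 1 - a := by linarith [ha.2]
    set t : ℝ := (1-b)/(1-a) with ht
    have ht0 : 0 < t := div_pos (by linarith [hb.2]) h1a
    have ht1 : t < 1 := by
      rw [div_lt_one h1a]; linarith
    have hsum : t + (1-t) = 1 := by ring
    have hcomb : t • a + (1-t) • (1:ℝ) = b := by
      simp only [smul_eq_mul, mul_one]
      rw [ht]
      field_simp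
      ring
    have hane : a ≠ (1:ℝ) := by linarith [ha.2]
    have := hconc.2 (x := a) (y := 1)
      ⟨le_of_lt ha.1, le_of_lt ha.2⟩ ⟨zero_le_one, le_refl 1⟩ hane ht0 (by linarith) hsum
    rw [hcomb] at this
    simp only [smul_eq_mul] at this
    rw [hra, hr1, hrb] at this
    nlinarith
  rcases lt_or_gt_of_ne hne with h | h
  · exact absurd (key y c hy hcmem h hry hrc) (fun f => f)
  · exact absurd (key c y hcmem hy h hrc hry) (fun f => f)
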